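/- Let S = K[x_1,...,x_n] over a perfect infinite field K of characteristic p > 0, n ≥ 3. Suppose f ∈ S satisfies F_*f = Σ_{i=0}^{p-1} f_i · F_*(x_1^{p-1}...x_{n-1}^{p-1} x_n^i) where each f_i ∈ K[x_1,...,x_{n-1}] is homogeneous of the same degree d, and the f_i span a K-vector subspace of S_d of dimension at least 2. Let l = c_0^p + c_1^p x_1 + ... + c_n^p x_n with c_n ≠ 0, and identify S/(l) ≅ K[x_1,...,x_{n-1}] via x_n ↦ -c_n^{-p}(c_0^p + c_1^p x_1 + ... + c_{n-1}^p x_{n-1}). Then the image ideal τ(S, f^{1/p})·S/(l) differs from τ(S/(l), f̄^{1/p}): their degree-d graded pieces are different K-vector subspaces of (S/(l))_d, with the former of dimension ≥ 2 and the latter of dimension ≤ 1. -/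

import Mathlib

open MvPolynomial

/-- For `F_*S` free over `S = K[x_1,…,x_n]` with basis `{F_*(x^α) : α ∈ {0,…,p-1}^n}`,
`frobCoeff p α f` is the coefficient `s_α ∈ S` in the expansion
`F_*f = Σ_α s_α • F_*(x^α)`, i.e. `f = Σ_α s_α^p x^α`. -/
noncomputable def frobCoeff {K : Type*} [Field K] (p : ℕ) [Fact p.Prime] [ExpChar K p]
    [PerfectRing K p] {n : ℕ} (α : Fin n → ℕ) (f : MvPolynomial (Fin n) K) :
    MvPolynomial (Fin n) K :=
  ∑ d ∈ f.support,
    if ∀ i, d i % p = α i then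
      monomial (Finsupp.mapRange (· / p) (Nat.zero_div p) d)
        ((frobeniusEquiv K p).symm (f.coeff d))
    else 0

/-- The generating trace map `Φ : F_*S → S`, the `S`-linear projection onto the
coefficient of `F_*(x_1^(p-1) ⋯ x_n^(p-1))`. -/
noncomputable def phi {K : Type*} [Field K] (p : ℕ) [Fact p.Prime] [ExpChar K p]
    [PerfectRing K p] {n : ℕ} (f : MvPolynomial (Fin n) K) : MvPolynomial (Fin n) K :=
  frobCoeff p (fun _ => p - 1) f

/-- The ideal `Φ(F_*(f•S)) = {Φ(F_*(f•h)) : h ∈ S}`, which computes the test ideal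
`τ(S, f^(1/p))`. -/
noncomputable def tauP {K : Type*} [Field K] (p : ℕ) [Fact p.Prime] [ExpChar K p]
    [PerfectRing K p] {n : ℕ} (f : MvPolynomial (Fin n) K) : Ideal (MvPolynomial (Fin n) K) :=
  Ideal.span {g | ∃ h, g = phi p (f * h)}

/-- The identification `S/(l) ≅ R = K[x_1,…,x_(n-1)]` for
`l = c₀^p + c₁^p x_1 + … + c_n^p x_n` with `c_n ≠ 0`: the algebra map `S → R` fixing
`x_1, …, x_(n-1)` and sending `x_n ↦ -c_n^(-p)(c₀^p + c₁^p x_1 + … + c_(n-1)^p x_(n-1))`.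
Here `S` has `m+1` variables and `R` has `m` variables. -/
noncomputable def substHom {K : Type*} [Field K] (p m : ℕ) (c0 : K) (c : Fin (m + 1) → K) :
    MvPolynomial (Fin (m + 1)) K →ₐ[K] MvPolynomial (Fin m) K :=
  aeval fun i : Fin (m + 1) =>
    if h : (i : ℕ) < m then X ⟨i, h⟩
    else -C ((c (Fin.last m))⁻¹ ^ p) *
      (C (c0 ^ p) + ∑ j : Fin m, C (c (Fin.castSucc j) ^ p) * X j)

/-- The polynomial `f` with `F_*f = Σ_(i=0)^(p-1) f_i F_*((x_1⋯x_(n-1))^(p-1) x_n^i)`,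
i.e. `f = Σ_i f_i^p (x_1⋯x_(n-1))^(p-1) x_n^i`, for `f_i ∈ K[x_1,…,x_(n-1)]`. -/
noncomputable def fGen {K : Type*} [Field K] (p m : ℕ)
    (fi : ℕ → MvPolynomial (Fin m) K) : MvPolynomial (Fin (m + 1)) K :=
  ∑ i ∈ Finset.range p, (rename Fin.castSucc (fi i)) ^ p *
    (∏ j : Fin m, X (Fin.castSucc j)) ^ (p - 1) * X (Fin.last m) ^ i


section Aux

variable {K : Type*} [Field K] {p : ℕ} [Fact p.Prime] [ExpChar K p] [PerfectRing K p] {n : ℕ}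

lemma charPK (K : Type*) [Field K] (p : ℕ) [Fact p.Prime] [ExpChar K p] : CharP K p := by
  rcases ‹ExpChar K p› with _ | h
  · exact absurd (Fact.out : Nat.Prime 1) Nat.not_prime_one
  · assumption

lemma hp_pos (p : ℕ) [Fact p.Prime] : 0 < p := (Fact.out : p.Prime).pos

/-- the exponent vector with all entries `p-1`. -/
noncomputable def pm1 (p n : ℕ) : Fin n →₀ ℕ := Finsupp.equivFunOnFinite.symm fun _ => p - 1

@[simp] lemma pm1_apply (p : ℕ) (i : Fin n) : pm1 p n i = p - 1 := rfl

lemma coeff_phi (f : MvPolynomial (Fin n) K) (e : Fin n →₀ ℕ) :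
    coeff e (phi p f) = (frobeniusEquiv K p).symm (coeff (p • e + pm1 p n) f) := by
  have hp0 : 0 < p := hp_pos p
  have hp1 : p - 1 < p := Nat.sub_lt hp0 one_pos
  unfold phi frobCoeff
  rw [coeff_sum]
  set D : Fin n →₀ ℕ := p • e + pm1 p n with hD
  have hDi : ∀ i, D i = p * e i + (p - 1) := by
    intro i; simp [hD, pm1, mul_comm]
  rw [Finset.sum_eq_single D]
  · by_cases hmem : D ∈ f.support
    · rw [if_pos, coeff_monomial, if_pos]
      · ext i
        simp only [Finsupp.mapRange_apply, hDi i]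
        rw [Nat.mul_add_div hp0, Nat.div_eq_of_lt hp1, add_zero]
      · intro i
        rw [hDi i, Nat.mul_add_mod, Nat.mod_eq_of_lt hp1]
    · rw [notMem_support_iff.mp hmem, map_zero]
      split_ifs <;> simp
  · intro b hb hbD
    split_ifs with hc
    · rw [coeff_monomial, if_neg]
      intro hbe
      apply hbD
      ext i
      have h1 : b i % p = p - 1 := hc i
      have h2 : b i / p = e i := by
        rw [← hbe]; simp [Finsupp.mapRange_apply]
      rw [hDi i, ← h2, ← h1, Nat.div_add_mod]
    · exact coeff_zero _
  · intro hD'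
    rw [notMem_support_iff.mp hD']
    simp


lemma phi_zero : phi p (0 : MvPolynomial (Fin n) K) = 0 := by
  ext e; simp [coeff_phi]

lemma phi_add (f g : MvPolynomial (Fin n) K) : phi p (f + g) = phi p f + phi p g := by
  ext e; simp [coeff_phi, coeff_add, map_add]

lemma phi_sum {ι : Type*} (s : Finset ι) (f : ι → MvPolynomial (Fin n) K) :
    phi p (∑ i ∈ s, f i) = ∑ i ∈ s, phi p (f i) := by
  classical
  induction s using Finset.cons_induction with
  | empty => simpa using phi_zero
  | cons a s ha ih => rw [Finset.sum_cons, phi_add, ih, Finset.sum_cons]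

lemma mul_le_mul_pm1_iff (hp0 : 0 < p) (a b : ℕ) : p * a ≤ p * b + (p - 1) ↔ a ≤ b := by
  constructor
  · intro h
    by_contra hab
    push_neg at hab
    have h2 : p * (b + 1) ≤ p * a := Nat.mul_le_mul_left p hab
    rw [Nat.mul_add, Nat.mul_one] at h2
    have h3 : p * b + p ≤ p * b + (p - 1) := h2.trans h
    have := Nat.le_of_add_le_add_left h3
    omega
  · intro h
    exact (Nat.mul_le_mul_left p h).trans (Nat.le_add_right _ _)

lemma phi_monomial_mul (β : Fin n →₀ ℕ) (a : K) (u : MvPolynomial (Fin n) K) :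
    phi p (monomial (p • β) (a ^ p) * u) = monomial β a * phi p u := by
  have hp0 : 0 < p := hp_pos p
  ext e
  rw [coeff_phi, coeff_monomial_mul', coeff_monomial_mul']
  by_cases hbe : β ≤ e
  · rw [if_pos hbe, if_pos, coeff_phi]
    · have hsub : p • e + pm1 p n - p • β = p • (e - β) + pm1 p n := by
        ext i
        have hi := Finsupp.le_def.mp hbe i
        simp only [Finsupp.coe_add, Finsupp.coe_tsub, Finsupp.coe_smul, Pi.add_apply,
          Pi.sub_apply, Pi.smul_apply, smul_eq_mul, pm1_apply]
        have h1 : p * (e i - β i) = p * e i - p * β i := Nat.mul_sub p (e i) (β i)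
        have h2 : p * β i ≤ p * e i := Nat.mul_le_mul_left p hi
        omega
      rw [hsub, map_mul]
      congr 1
      rw [← frobenius_def, frobeniusEquiv_symm_apply_frobenius]
    · intro i
      simp only [Finsupp.coe_add, Finsupp.coe_smul, Pi.add_apply, Pi.smul_apply,
        smul_eq_mul, pm1_apply]
      exact (mul_le_mul_pm1_iff hp0 _ _).mpr (Finsupp.le_def.mp hbe i)
  · rw [if_neg hbe, if_neg, map_zero]
    intro hle
    apply hbe
    intro i
    have hi := Finsupp.le_def.mp hle i
    simp only [Finsupp.coe_add, Finsupp.coe_smul, Pi.add_apply, Pi.smul_apply,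
      smul_eq_mul, pm1_apply] at hi
    exact (mul_le_mul_pm1_iff hp0 _ _).mp hi

lemma phi_pow_mul (g u : MvPolynomial (Fin n) K) : phi p (g ^ p * u) = g * phi p u := by
  haveI : CharP K p := charPK K p
  induction g using MvPolynomial.induction_on' with
  | monomial s a => rw [monomial_pow, phi_monomial_mul]
  | add f g hf hg =>
    rw [add_pow_char, add_mul, phi_add, hf, hg, add_mul]

lemma phi_C_mul (a : K) (u : MvPolynomial (Fin n) K) :
    phi p (C a * u) = C ((frobeniusEquiv K p).symm a) * phi p u := by
  have h : (C a : MvPolynomial (Fin n) K) = (C ((frobeniusEquiv K p).symm a)) ^ p := by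
    rw [← C_pow, frobeniusEquiv_symm_pow_p]
  rw [h, phi_pow_mul]

/-- `tauP` as a set is already an ideal. -/
noncomputable def tauIdeal (f : MvPolynomial (Fin n) K) :
    Ideal (MvPolynomial (Fin n) K) where
  carrier := {g | ∃ h, g = phi p (f * h)}
  add_mem' := by
    rintro a b ⟨h1, e1⟩ ⟨h2, e2⟩
    exact ⟨h1 + h2, by rw [e1, e2, mul_add, phi_add]⟩
  zero_mem' := ⟨0, by rw [mul_zero, phi_zero]⟩
  smul_mem' := by
    rintro r a ⟨h, e1⟩
    refine ⟨r ^ p * h, ?_⟩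
    rw [e1, smul_eq_mul, show f * (r ^ p * h) = r ^ p * (f * h) by ring, phi_pow_mul]

lemma mem_tauP {f g : MvPolynomial (Fin n) K} : g ∈ tauP p f ↔ ∃ h, g = phi p (f * h) := by
  have : tauP p f = tauIdeal f := Ideal.span_eq (tauIdeal f)
  rw [this]; rfl


lemma prod_monomial_one {ι : Type*} (s : Finset ι) (g : ι → (Fin n →₀ ℕ)) :
    (∏ k ∈ s, monomial (g k) (1 : K)) = monomial (∑ k ∈ s, g k) 1 := by
  classical
  induction s using Finset.cons_induction with
  | empty => simp [monomial_zero']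
  | cons a s ha ih =>
    rw [Finset.prod_cons, ih, monomial_mul, one_mul, Finset.sum_cons]

lemma phi_monomial_pm1 : phi p (monomial (pm1 p n) (1 : K)) = 1 := by
  have hp0 : 0 < p := hp_pos p
  ext e
  rw [coeff_phi, coeff_monomial, coeff_one]
  by_cases he : e = 0
  · subst he
    rw [if_pos, if_pos rfl, map_one]
    rw [smul_zero, zero_add]
  · rw [if_neg, if_neg (Ne.symm he), map_zero]
    intro hcon
    apply he
    ext i
    have := DFunLike.congr_fun hcon i
    simp only [pm1_apply, Finsupp.coe_add, Finsupp.coe_smul, Pi.add_apply, Pi.smul_apply,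
      smul_eq_mul] at this
    have hpe : p * e i = 0 := by omega
    have h0 : e i = 0 := by
      rcases Nat.mul_eq_zero.mp hpe with h | h
      · exact absurd h hp0.ne'
      · exact h
    simpa using h0

end Aux

section AuxM

variable {K : Type*} [Field K] {p : ℕ} [Fact p.Prime] [ExpChar K p] [PerfectRing K p] {m : ℕ}

/-- exponent vector in `m+1` variables: `q` on the first `m`, `j` on the last. -/
noncomputable def TT (m q j : ℕ) : Fin (m + 1) →₀ ℕ :=
  Finsupp.equivFunOnFinite.symm fun i => if i = Fin.last m then j else q

@[simp] lemma TT_apply (q j : ℕ) (i : Fin (m + 1)) :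
    TT m q j i = if i = Fin.last m then j else q := rfl

lemma mu_pow_mul_X_pow (q j : ℕ) :
    ((∏ k : Fin m, X (Fin.castSucc k) : MvPolynomial (Fin (m + 1)) K) ^ q *
      X (Fin.last m) ^ j) = monomial (TT m q j) 1 := by
  rw [← Finset.prod_pow]
  simp_rw [X_pow_eq_monomial]
  rw [prod_monomial_one, monomial_mul, one_mul]
  have hT : (∑ k : Fin m, Finsupp.single (Fin.castSucc k) q) + Finsupp.single (Fin.last m) j
      = TT m q j := by
    ext i
    simp only [Finsupp.coe_add, Pi.add_apply, TT_apply, Finsupp.coe_finset_sum,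
      Finset.sum_apply]
    induction i using Fin.lastCases with
    | last =>
      rw [if_pos rfl, Finsupp.single_eq_same]
      have : ∀ k : Fin m, (Finsupp.single (Fin.castSucc k) q) (Fin.last m) = 0 := fun k =>
        Finsupp.single_eq_of_ne' (Fin.castSucc_lt_last k).ne
      rw [Finset.sum_eq_zero (fun k _ => this k), zero_add]
    | cast k0 =>
      rw [if_neg (Fin.castSucc_lt_last k0).ne,
        Finsupp.single_eq_of_ne' (Fin.castSucc_lt_last k0).ne', add_zero]
      have : ∀ k : Fin m, (Finsupp.single (Fin.castSucc k) q) (Fin.castSucc k0)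
          = if k = k0 then q else 0 := by
        intro k
        rw [Finsupp.single_apply]
        simp [Fin.castSucc_inj]
      rw [Finset.sum_congr rfl (fun k _ => this k)]
      simp
  rw [hT]

lemma phi_monomial_TT (j : ℕ) (hj : j ≤ 2 * p - 2) :
    phi p (monomial (TT m (p - 1) j) (1 : K)) = if j = p - 1 then (1 : MvPolynomial (Fin (m+1)) K) else 0 := by
  have hp0 : 0 < p := hp_pos p
  by_cases hj' : j = p - 1
  · rw [if_pos hj']
    have : TT m (p - 1) j = pm1 p (m + 1) := by
      ext i; simp [hj']
    rw [this, phi_monomial_pm1]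
  · rw [if_neg hj']
    ext e
    rw [coeff_phi, coeff_monomial, if_neg, map_zero, coeff_zero]
    intro hcon
    have := DFunLike.congr_fun hcon (Fin.last m)
    simp only [TT_apply, eq_self_iff_true, if_true, Finsupp.coe_add, Finsupp.coe_smul,
      Pi.add_apply, Pi.smul_apply, smul_eq_mul, pm1_apply] at this
    rcases Nat.eq_zero_or_pos (e (Fin.last m)) with h0 | h1
    · rw [h0, Nat.mul_zero, zero_add] at this; exact hj' this
    · have hpe : p ≤ p * e (Fin.last m) := Nat.le_mul_of_pos_right p h1
      omega

lemma phi_fGen_mul (fi : ℕ → MvPolynomial (Fin m) K) {i : ℕ} (hi : i < p) :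
    phi p (fGen p m fi * X (Fin.last m) ^ (p - 1 - i)) = rename Fin.castSucc (fi i) := by
  have hp0 : 0 < p := hp_pos p
  unfold fGen
  rw [Finset.sum_mul]
  have hterm : ∀ k, (rename Fin.castSucc (fi k)) ^ p *
        (∏ j : Fin m, X (Fin.castSucc j)) ^ (p - 1) * X (Fin.last m) ^ k *
        X (Fin.last m) ^ (p - 1 - i)
      = (rename Fin.castSucc (fi k)) ^ p * monomial (TT m (p-1) (k + (p - 1 - i))) 1 := by
    intro k
    rw [mul_assoc, mul_assoc, ← pow_add, ← mu_pow_mul_X_pow]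
  simp_rw [hterm]
  rw [phi_sum]
  have hterm2 : ∀ k ∈ Finset.range p, phi p ((rename Fin.castSucc (fi k)) ^ p *
      monomial (TT m (p-1) (k + (p - 1 - i))) 1)
      = rename Fin.castSucc (fi k) * (if k + (p - 1 - i) = p - 1 then 1 else 0) := by
    intro k hk
    rw [phi_pow_mul, phi_monomial_TT]
    have := Finset.mem_range.mp hk
    omega
  rw [Finset.sum_congr rfl hterm2, Finset.sum_eq_single i]
  · rw [if_pos (by omega), mul_one]
  · intro k hk hki
    rw [if_neg (by have := Finset.mem_range.mp hk; omega), mul_zero]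
  · intro hcon
    exact absurd (Finset.mem_range.mpr hi) hcon

lemma substHom_rename (c0 : K) (c : Fin (m + 1) → K) (q : MvPolynomial (Fin m) K) :
    substHom p m c0 c (rename Fin.castSucc q) = q := by
  unfold substHom
  rw [aeval_rename]
  have hfun : ((fun i : Fin (m + 1) =>
      if h : (i : ℕ) < m then (X ⟨i, h⟩ : MvPolynomial (Fin m) K)
      else -C ((c (Fin.last m))⁻¹ ^ p) *
        (C (c0 ^ p) + ∑ j : Fin m, C (c (Fin.castSucc j) ^ p) * X j)) ∘ Fin.castSucc)
      = fun j : Fin m => (X j : MvPolynomial (Fin m) K) := by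
    funext j
    simp only [Function.comp_apply, Fin.coe_castSucc, j.isLt, dif_pos]
  rw [hfun, aeval_X_left_apply]

lemma substHom_X_last (c0 : K) (c : Fin (m + 1) → K) :
    substHom p m c0 c (X (Fin.last m)) = -C ((c (Fin.last m))⁻¹ ^ p) *
      (C (c0 ^ p) + ∑ j : Fin m, C (c (Fin.castSucc j) ^ p) * X j) := by
  unfold substHom
  rw [aeval_X, dif_neg (by simp)]


lemma degree_fintype (f : Fin m →₀ ℕ) : f.degree = ∑ i, f i := by
  rw [Finsupp.degree]
  exact Finset.sum_subset (Finset.subset_univ _)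
    (fun i _ hi => Finsupp.notMem_support_iff.mp hi)

lemma degree_fin_add (a b : Fin m →₀ ℕ) : (a + b).degree = a.degree + b.degree := by
  rw [degree_fintype, degree_fintype, degree_fintype, ← Finset.sum_add_distrib]
  simp

lemma homogComp_mul {N : ℕ} {u : MvPolynomial (Fin m) K} (hu : u.IsHomogeneous N)
    (v : MvPolynomial (Fin m) K) :
    homogeneousComponent N (u * v) = u * C (coeff 0 v) := by
  ext e
  rw [coeff_homogeneousComponent]
  have hRHS : coeff e (u * C (coeff 0 v)) = coeff e u * coeff 0 v := by
    rw [mul_comm u, coeff_C_mul, mul_comm]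
  by_cases he : e.degree = N
  · rw [if_pos he, coeff_mul, hRHS, Finset.sum_eq_single ((e, 0) : (Fin m →₀ ℕ) × (Fin m →₀ ℕ))]
    · intro b hb hbe
      have hb2 : b.1 + b.2 = e := Finset.HasAntidiagonal.mem_antidiagonal.mp hb
      rcases eq_or_ne b.1.degree N with h1 | h1
      · exfalso
        apply hbe
        have hdeg : b.1.degree + b.2.degree = N := by rw [← degree_fin_add, hb2, he]
        have hz : b.2.degree = 0 := by omega
        have hz2 : b.2 = 0 := (Finsupp.degree_eq_zero_iff _).mp hz
        have : b.1 = e := by rw [← hb2, hz2, add_zero]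
        exact Prod.ext this hz2
      · rw [hu.coeff_eq_zero h1, zero_mul]
    · intro hne
      exact absurd (Finset.HasAntidiagonal.mem_antidiagonal.mpr (add_zero e)) hne
  · rw [if_neg he, hRHS, hu.coeff_eq_zero he, zero_mul]

lemma degree_smul_add_pm1 (e : Fin m →₀ ℕ) :
    (p • e + pm1 p m).degree = p * e.degree + m * (p - 1) := by
  rw [degree_fintype, degree_fintype]
  simp only [Finsupp.coe_add, Finsupp.coe_smul, Pi.add_apply, Pi.smul_apply, smul_eq_mul,
    pm1_apply]
  rw [Finset.sum_add_distrib, ← Finset.mul_sum, Finset.sum_const, Finset.card_univ,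
    Fintype.card_fin, smul_eq_mul]

lemma homogComp_phi (u : MvPolynomial (Fin m) K) (dd : ℕ) :
    homogeneousComponent dd (phi p u)
      = phi p (homogeneousComponent (p * dd + m * (p - 1)) u) := by
  have hp0 : 0 < p := hp_pos p
  ext e
  rw [coeff_homogeneousComponent]
  have hR : coeff e (phi p (homogeneousComponent (p * dd + m * (p - 1)) u))
      = (frobeniusEquiv K p).symm
          (coeff (p • e + pm1 p m) (homogeneousComponent (p * dd + m * (p - 1)) u)) :=
    coeff_phi _ _
  rw [hR, coeff_homogeneousComponent]
  by_cases he : e.degree = dd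
  · rw [if_pos he, if_pos (by rw [degree_smul_add_pm1, he]), coeff_phi]
  · rw [if_neg he, if_neg, map_zero]
    rw [degree_smul_add_pm1]
    intro hcon
    exact he (Nat.eq_of_mul_eq_mul_left hp0 (by omega))

lemma mu_pow_eq (q : ℕ) :
    ((∏ j : Fin m, X j : MvPolynomial (Fin m) K)) ^ q
      = monomial (Finsupp.equivFunOnFinite.symm fun _ => q) 1 := by
  rw [← Finset.prod_pow]
  simp_rw [X_pow_eq_monomial]
  rw [prod_monomial_one]
  have hs : (∑ k : Fin m, Finsupp.single k q)
      = (Finsupp.equivFunOnFinite.symm fun _ => q : Fin m →₀ ℕ) := by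
    ext i
    rw [Finsupp.finset_sum_apply]
    have hterm : ∀ k ∈ (Finset.univ : Finset (Fin m)), (Finsupp.single k q) i
        = if k = i then q else 0 := fun k _ => Finsupp.single_apply
    rw [Finset.sum_congr rfl hterm, Finset.sum_ite_eq' Finset.univ i,
      if_pos (Finset.mem_univ i)]
    rfl
  rw [hs]

lemma mu_isHomogeneous (q : ℕ) :
    ((∏ j : Fin m, X j : MvPolynomial (Fin m) K) ^ q).IsHomogeneous (m * q) := by
  rw [mu_pow_eq]
  apply isHomogeneous_monomial (1 : K)
  rw [degree_fintype]
  have hterm : ∀ i ∈ (Finset.univ : Finset (Fin m)),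
      (Finsupp.equivFunOnFinite.symm fun _ => q : Fin m →₀ ℕ) i = q := fun i _ => rfl
  rw [Finset.sum_congr rfl hterm, Finset.sum_const, Finset.card_univ,
    Fintype.card_fin, smul_eq_mul]

lemma fbar_eq (c0 : K) (c : Fin (m + 1) → K) (fi : ℕ → MvPolynomial (Fin m) K) :
    substHom p m c0 c (fGen p m fi) = ∑ i ∈ Finset.range p,
      (fi i) ^ p * (∏ j : Fin m, X j) ^ (p - 1) *
        (substHom p m c0 c (X (Fin.last m))) ^ i := by
  have hmu : substHom p m c0 c (∏ j : Fin m, X (Fin.castSucc j)) = ∏ j : Fin m, X j := by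
    rw [map_prod]
    refine Finset.prod_congr rfl fun j _ => ?_
    rw [show (X (Fin.castSucc j) : MvPolynomial (Fin (m + 1)) K) = rename Fin.castSucc (X j) from
      (rename_X _ _).symm, substHom_rename]
  unfold fGen
  rw [map_sum]
  refine Finset.sum_congr rfl fun i hi => ?_
  rw [map_mul, map_mul, map_pow, map_pow, map_pow, substHom_rename, hmu]

lemma tau_component (c0 : K) (c : Fin (m + 1) → K) (d : ℕ) (fi : ℕ → MvPolynomial (Fin m) K)
    (hhom : ∀ i < p, (fi i).IsHomogeneous d) (h : MvPolynomial (Fin m) K) :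
    homogeneousComponent d (phi p (substHom p m c0 c (fGen p m fi) * h))
      = C ((frobeniusEquiv K p).symm (constantCoeff h)) *
        ∑ i ∈ Finset.range p,
          C ((frobeniusEquiv K p).symm
              (constantCoeff (substHom p m c0 c (X (Fin.last m)))) ^ i) * fi i := by
  set L : MvPolynomial (Fin m) K := substHom p m c0 c (X (Fin.last m)) with hL
  set γ : K := (frobeniusEquiv K p).symm (constantCoeff L) with hγdef
  have hγ : γ ^ p = constantCoeff L := frobeniusEquiv_symm_pow_p K p _
  rw [homogComp_phi, fbar_eq, Finset.sum_mul, map_sum (homogeneousComponent (p * d + m * (p-1)))]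
  have hterm : ∀ i ∈ Finset.range p,
      homogeneousComponent (p * d + m * (p - 1)) ((fi i) ^ p * (∏ j : Fin m, X j) ^ (p - 1) * L ^ i * h)
        = ((C (γ ^ i) * fi i) ^ p) * (C (constantCoeff h) * monomial (pm1 p m) 1) := by
    intro i hi
    have hre : (fi i) ^ p * (∏ j : Fin m, X j) ^ (p - 1) * L ^ i * h
        = ((fi i) ^ p * (∏ j : Fin m, X j) ^ (p - 1)) * (L ^ i * h) := by ring
    have hu : ((fi i) ^ p * (∏ j : Fin m, X j) ^ (p - 1)).IsHomogeneous (p * d + m * (p - 1)) := by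
      have := ((hhom i (Finset.mem_range.mp hi)).pow p).mul (mu_isHomogeneous (p - 1))
      rwa [show d * p + m * (p - 1) = p * d + m * (p - 1) by ring] at this
    rw [hre, homogComp_mul hu]
    rw [show coeff 0 (L ^ i * h) = constantCoeff (L ^ i * h) from rfl, map_mul, map_pow, ← hγ]
    rw [show ((∏ j : Fin m, X j : MvPolynomial (Fin m) K)) ^ (p - 1)
      = monomial (pm1 p m) 1 from mu_pow_eq (p - 1)]
    rw [map_mul (C : K →+* MvPolynomial (Fin m) K), mul_pow, ← C_pow, ← pow_mul, ← pow_mul,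
      Nat.mul_comm i p]
    ring
  rw [← hL, Finset.sum_congr rfl hterm, phi_sum]
  have hterm2 : ∀ i ∈ Finset.range p,
      phi p ((C (γ ^ i) * fi i) ^ p * (C (constantCoeff h) * monomial (pm1 p m) 1))
        = C ((frobeniusEquiv K p).symm (constantCoeff h)) * (C (γ ^ i) * fi i) := by
    intro i hi
    rw [phi_pow_mul, phi_C_mul, phi_monomial_pm1, mul_one, mul_comm]
  rw [Finset.sum_congr rfl hterm2, ← Finset.mul_sum]

end AuxM


/-- with `f_i ∈ K[x_1,…,x_(n-1)]` homogeneous of common degree `d` spanning a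
`K`-vector space of dimension ≥ 2, and `l = c₀^p + Σ c_j^p x_j` with `c_n ≠ 0`, the image
ideal `τ(S, f^(1/p))·S/(l)` differs from `τ(S/(l), f̄^(1/p))`: their degree-`d` graded
pieces are different subspaces of `(S/(l))_d`, the former of dimension ≥ 2 and the latter of
dimension ≤ 1.  (Here `n = m+1 ≥ 3`.) -/
theorem statement10 {K : Type*} [Field K] [Infinite K] (p m : ℕ) [Fact p.Prime] [ExpChar K p]
    [PerfectRing K p] (hm : 2 ≤ m) (d : ℕ) (fi : ℕ → MvPolynomial (Fin m) K)
    (hhom : ∀ i < p, (fi i).IsHomogeneous d)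
    (hspan : 2 ≤ Module.finrank K ↥(Submodule.span K (fi '' Set.Iio p)))
    (c0 : K) (c : Fin (m + 1) → K) (hcn : c (Fin.last m) ≠ 0) :
    Submodule.restrictScalars K (Ideal.map (substHom p m c0 c).toRingHom (tauP p (fGen p m fi))) ⊓
          homogeneousSubmodule (Fin m) K d ≠
        Submodule.restrictScalars K (tauP p (substHom p m c0 c (fGen p m fi))) ⊓
          homogeneousSubmodule (Fin m) K d ∧
      2 ≤ Module.finrank K
        ↥(Submodule.restrictScalars K
            (Ideal.map (substHom p m c0 c).toRingHom (tauP p (fGen p m fi))) ⊓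
          homogeneousSubmodule (Fin m) K d) ∧
      Module.finrank K
        ↥(Submodule.restrictScalars K (tauP p (substHom p m c0 c (fGen p m fi))) ⊓
          homogeneousSubmodule (Fin m) K d) ≤ 1 := by
    classical
  have hp0 : 0 < p := hp_pos p
  set fbar := substHom p m c0 c (fGen p m fi) with hfbar
  set γ : K := (frobeniusEquiv K p).symm
    (constantCoeff (substHom p m c0 c (X (Fin.last m)))) with hγ
  set G : MvPolynomial (Fin m) K := ∑ i ∈ Finset.range p, C (γ ^ i) * fi i with hG
  have hGhom : G ∈ homogeneousSubmodule (Fin m) K d := by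
    rw [hG]
    apply Submodule.sum_mem
    intro i hi
    rw [show (C (γ ^ i) * fi i) = (γ ^ i) • fi i from (smul_eq_C_mul _ _).symm]
    exact Submodule.smul_mem _ _
      ((mem_homogeneousSubmodule _ _).mpr (hhom i (Finset.mem_range.mp hi)))
  haveI hFD : FiniteDimensional K (homogeneousSubmodule (Fin m) K d) := by
    apply Submodule.finiteDimensional_of_le (S₂ := restrictTotalDegree (Fin m) K d)
    intro x hx
    rw [mem_restrictTotalDegree]
    exact ((mem_homogeneousSubmodule _ _).mp hx).totalDegree_le
  set A := Submodule.restrictScalars K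
      (Ideal.map (substHom p m c0 c).toRingHom (tauP p (fGen p m fi))) ⊓
      homogeneousSubmodule (Fin m) K d with hA
  set B := Submodule.restrictScalars K (tauP p fbar) ⊓
      homogeneousSubmodule (Fin m) K d with hB
  haveI hFDA : FiniteDimensional K A := Submodule.finiteDimensional_of_le inf_le_right
  have hsub : Submodule.span K (fi '' Set.Iio p) ≤ A := by
    rw [Submodule.span_le]
    rintro x ⟨i, hi, rfl⟩
    have hi' : i < p := hi
    refine Submodule.mem_inf.mpr ⟨?_, (mem_homogeneousSubmodule _ _).mpr (hhom i hi')⟩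
    show fi i ∈ Ideal.map (substHom p m c0 c).toRingHom (tauP p (fGen p m fi))
    have hmem : phi p (fGen p m fi * X (Fin.last m) ^ (p - 1 - i)) ∈ tauP p (fGen p m fi) :=
      mem_tauP.mpr ⟨_, rfl⟩
    have hmap := Ideal.mem_map_of_mem (substHom p m c0 c).toRingHom hmem
    simp only [AlgHom.toRingHom_eq_coe, RingHom.coe_coe] at hmap ⊢
    rwa [phi_fGen_mul fi hi', substHom_rename] at hmap
  have h2le : 2 ≤ Module.finrank K A := le_trans hspan (Submodule.finrank_mono hsub)
  have hBle : B ≤ Submodule.span K ({G} : Set (MvPolynomial (Fin m) K)) := by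
    intro w hw
    have hw1 : w ∈ tauP p fbar := (Submodule.mem_inf.mp hw).1
    have hw2 : w ∈ homogeneousSubmodule (Fin m) K d := (Submodule.mem_inf.mp hw).2
    obtain ⟨h, rfl⟩ := mem_tauP.mp hw1
    have hcomp : homogeneousComponent d (phi p (fbar * h)) = phi p (fbar * h) := by
      rw [homogeneousComponent_of_mem hw2, if_pos rfl]
    rw [← hcomp, hfbar, tau_component c0 c d fi hhom h, ← hγ, ← hG, ← smul_eq_C_mul]
    exact Submodule.smul_mem _ _ (Submodule.mem_span_singleton_self G)
  haveI : FiniteDimensional K (Submodule.span K ({G} : Set (MvPolynomial (Fin m) K))) :=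
    Submodule.finiteDimensional_of_le
      ((Submodule.span_le (p := homogeneousSubmodule (Fin m) K d)).mpr
        (Set.singleton_subset_iff.mpr hGhom))
  have h1ge : Module.finrank K B ≤ 1 := by
    refine le_trans (Submodule.finrank_mono hBle) ?_
    by_cases hG0 : G = 0
    · rw [hG0, Submodule.span_zero_singleton]
      simp
    · rw [finrank_span_singleton hG0]
  refine ⟨?_, h2le, h1ge⟩
  intro hEq
  rw [hEq] at h2le
  omega
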